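/- Let a < b be real numbers and let g_0,…,g_n be real-valued functions that are continuous on [a,b] and n times differentiable on (a,b). If (g_0,…,g_n) is an M_+-system on [a,b], then W_0^k(x) ≥ 0 for every x ∈ (a,b) and every k ∈ {0,…,n}. -/

import Mathlib

open Set Filter Finset Function
open scoped Topology

/-- Derivative of a Taylor-style polynomial. -/
lemma taylor_hasDerivAt (c : ℕ → ℝ) (x : ℝ) (d : ℕ) (y : ℝ) :
    HasDerivAt (fun z => ∑ i ∈ range (d + 1), c i * (z - x) ^ i / (Nat.factorial i))
      (∑ i ∈ range d, c (i + 1) * (y - x) ^ i / (Nat.factorial i)) y := by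
  have h : ∀ i ∈ range (d + 1),
      HasDerivAt (fun z => c i * (z - x) ^ i / (Nat.factorial i))
        (c i * ((i : ℝ) * (y - x) ^ (i - 1)) / (Nat.factorial i)) y := by
    intro i _
    have hp : HasDerivAt (fun z : ℝ => (z - x) ^ i) ((i : ℝ) * (y - x) ^ (i - 1)) y := by
      have := (((hasDerivAt_id y).sub_const x).fun_pow i)
      simpa using this
    simpa [mul_comm, mul_assoc, mul_div_assoc] using (hp.const_mul (c i)).div_const ((Nat.factorial i : ℝ))
  have hsum := HasDerivAt.fun_sum h
  refine hsum.congr_deriv ?_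
  rw [Finset.sum_range_succ']
  simp only [Nat.cast_zero, zero_mul, mul_zero, zero_div, add_zero]
  refine Finset.sum_congr rfl fun i _ => ?_
  rw [Nat.factorial_succ]
  push_cast
  field_simp

/-- Mean value theorem for iterated forward differences. -/
lemma fd_mvt (m : ℕ) : ∀ (F : ℕ → ℝ → ℝ) (x ε : ℝ), 0 < ε →
    (∀ j < m, ∀ y ∈ Set.Icc x (x + m * ε), HasDerivAt (F j) (F (j + 1) y) y) →
    ∃ ξ ∈ Set.Icc x (x + m * ε), (fwdDiff ε)^[m] (F 0) x = ε ^ m * F m ξ := by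
  induction m with
  | zero => intro F x ε hε _; exact ⟨x, by simp, by simp⟩
  | succ m ih =>
    intro F x ε hε hF
    have key : ∀ j < m, ∀ y ∈ Set.Icc x (x + (m : ℝ) * ε),
        HasDerivAt (fun z => F j (z + ε) - F j z) (F (j + 1) (y + ε) - F (j + 1) y) y := by
      intro j hj y hy
      have hy1 : y ∈ Set.Icc x (x + ((m : ℕ) + 1 : ℕ) * ε) := by
        refine ⟨hy.1, ?_⟩; push_cast; nlinarith [hy.2]
      have hy2 : y + ε ∈ Set.Icc x (x + ((m : ℕ) + 1 : ℕ) * ε) := by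
        refine ⟨by linarith [hy.1], ?_⟩; push_cast; nlinarith [hy.2]
      have hshift : HasDerivAt (fun z => F j (z + ε)) (F (j + 1) (y + ε)) y := by
        have := HasDerivAt.comp y (hF j (by omega) (y + ε) hy2) ((hasDerivAt_id y).add_const ε)
        simpa [Function.comp_def] using this
      exact hshift.sub (hF j (by omega) y hy1)
    obtain ⟨ξ, hξ, hval⟩ := ih (fun j y => F j (y + ε) - F j y) x ε hε key
    have hξmem : ∀ y ∈ Set.Icc ξ (ξ + ε), y ∈ Set.Icc x (x + ((m : ℕ) + 1 : ℕ) * ε) := by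
      intro y hy
      refine ⟨by linarith [hξ.1, hy.1], ?_⟩
      push_cast; nlinarith [hξ.2, hy.2]
    have hcont : ContinuousOn (F m) (Set.Icc ξ (ξ + ε)) := by
      intro y hy
      exact ((hF m (by omega) y (hξmem y hy)).continuousAt).continuousWithinAt
    obtain ⟨c, hc, hcval⟩ := exists_hasDerivAt_eq_slope (F m) (F (m + 1))
      (by linarith : ξ < ξ + ε) hcont
      (fun y hy => hF m (by omega) y (hξmem y (Set.mem_Icc_of_Ioo hy)))
    refine ⟨c, hξmem c (Set.mem_Icc_of_Ioo hc), ?_⟩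
    have h1 : (fwdDiff ε)^[m + 1] (F 0) x = (fwdDiff ε)^[m] (fun y => F 0 (y + ε) - F 0 y) x := by
      rw [Function.iterate_succ_apply]; rfl
    have h2 : F m (ξ + ε) - F m ξ = ε * F (m + 1) c := by
      rw [hcval, add_sub_cancel_left]; field_simp
    rw [h1, hval, h2]; ring

set_option maxHeartbeats 1000000 in
lemma fd_tendsto (a b : ℝ) (F : ℕ → ℝ → ℝ) (m : ℕ) (x : ℝ) (hx : x ∈ Set.Ioo a b)
    (hF : ∀ j < m, ∀ y ∈ Set.Ioo a b, HasDerivAt (F j) (F (j + 1) y) y) :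
    Filter.Tendsto (fun ε => (fwdDiff ε)^[m] (F 0) x / ε ^ m)
      (𝓝[>] (0 : ℝ)) (𝓝 (F m x)) := by
  rcases Nat.eq_zero_or_pos m with hm0 | hm
  · subst hm0; simpa using tendsto_const_nhds
  have hm1 : m - 1 + 1 = m := by omega
  -- Taylor family
  set T : ℕ → ℝ → ℝ :=
    fun j z => ∑ i ∈ range (m - j + 1), F (j + i) x * (z - x) ^ i / (Nat.factorial i) with hTdef
  have hTderiv : ∀ j < m, ∀ y : ℝ, HasDerivAt (T j) (T (j + 1) y) y := by
    intro j hj y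
    have h := taylor_hasDerivAt (fun l => F (j + l) x) x (m - j) y
    have heq : T (j + 1) y
        = ∑ i ∈ range (m - j), F (j + (i + 1)) x * (y - x) ^ i / (Nat.factorial i) := by
      simp only [hTdef]
      rw [show m - (j + 1) + 1 = m - j from by omega]
      exact Finset.sum_congr rfl fun i _ => by rw [show j + 1 + i = j + (i + 1) from by omega]
    rw [heq]
    exact h
  have hTtop : ∀ ξ : ℝ, T m ξ = F m x := by
    intro ξ
    simp only [hTdef]
    simp [Nat.sub_self]
  -- Step 1 : forward differences of T
  have hTfd : ∀ ε : ℝ, 0 < ε → (fwdDiff ε)^[m] (T 0) x = ε ^ m * F m x := by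
    intro ε hε
    obtain ⟨ξ, _, h⟩ := fd_mvt m T x ε hε (fun j hj y _ => hTderiv j hj y)
    rw [h, hTtop ξ]
  -- remainder
  set r : ℝ → ℝ := fun y => F 0 y - T 0 y with hrdef
  have hdecomp : ∀ ε : ℝ, (fwdDiff ε)^[m] (F 0) x
      = (fwdDiff ε)^[m] (T 0) x + (fwdDiff ε)^[m] r x := by
    intro ε
    have hsplit : F 0 = T 0 + r := by funext z; simp [hrdef]
    rw [hsplit, fwdDiff_iter_add, Pi.add_apply]
  -- little-o estimate for order m-1 remainder
  set φ : ℝ → ℝ := fun y => F (m - 1) y - F (m - 1) x - (y - x) * F m x with hφdef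
  have hφo : φ =o[𝓝 x] (fun y => y - x) := by
    have h := hF (m - 1) (by omega) x hx
    rw [hm1] at h
    have := hasDerivAt_iff_isLittleO.1 h
    simpa [hφdef, smul_eq_mul] using this
  have hT1 : ∀ y : ℝ, T (m - 1) y = F (m - 1) x + F m x * (y - x) := by
    intro y
    simp only [hTdef]
    rw [show m - (m - 1) + 1 = 2 from by omega]
    rw [Finset.sum_range_succ, Finset.sum_range_one]
    simp [Nat.factorial, hm1]
  -- main : remainder term tends to 0
  have main : Filter.Tendsto (fun ε => (fwdDiff ε)^[m] r x / ε ^ m) (𝓝[>] (0 : ℝ)) (𝓝 0) := by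
    rw [Metric.tendsto_nhds]
    intro δ hδ
    have hcpos : (0 : ℝ) < δ / (2 * m + 2) := by positivity
    have hlo := hφo.def hcpos
    rw [Metric.eventually_nhds_iff] at hlo
    obtain ⟨ρ, hρ, hball⟩ := hlo
    have hε₀ : (0 : ℝ) < min (ρ / (m + 1)) ((b - x) / (m + 1)) := by
      have : (0:ℝ) < b - x := by linarith [hx.2]
      have hm1' : (0:ℝ) < (m : ℝ) + 1 := by positivity
      exact lt_min (by positivity) (by positivity)
    filter_upwards [Ioo_mem_nhdsGT_of_mem (Set.left_mem_Ico.2 hε₀)] with ε hε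
    have hεpos : 0 < ε := hε.1
    have hεm : (m : ℝ) * ε < min (ρ / (m + 1)) ((b - x) / (m + 1)) * ((m : ℝ) + 1) := by
      nlinarith [hε.2, hεpos, Nat.cast_nonneg (α := ℝ) m]
    have hmερ : (m : ℝ) * ε < ρ := by
      have h1 : min (ρ / (m + 1)) ((b - x) / (m + 1)) ≤ ρ / (m + 1) := min_le_left _ _
      have hm1' : (0:ℝ) < (m : ℝ) + 1 := by positivity
      calc (m : ℝ) * ε < min (ρ / (m + 1)) ((b - x) / (m + 1)) * ((m : ℝ) + 1) := hεm
        _ ≤ ρ / (m + 1) * ((m : ℝ) + 1) := by nlinarith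
        _ = ρ := by field_simp
    have hmεb : x + (m : ℝ) * ε < b := by
      have h1 : min (ρ / (m + 1)) ((b - x) / (m + 1)) ≤ (b - x) / (m + 1) := min_le_right _ _
      have hm1' : (0:ℝ) < (m : ℝ) + 1 := by positivity
      have : (m : ℝ) * ε < b - x := by
        calc (m : ℝ) * ε < min (ρ / (m + 1)) ((b - x) / (m + 1)) * ((m : ℝ) + 1) := hεm
          _ ≤ (b - x) / (m + 1) * ((m : ℝ) + 1) := by nlinarith
          _ = b - x := by field_simp
      linarith
    have hcastm : ((m - 1 : ℕ) : ℝ) = (m : ℝ) - 1 := by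
      have : (1:ℕ) ≤ m := hm
      push_cast [this]; ring
    -- apply fd_mvt to the difference family
    set G : ℕ → ℝ → ℝ := fun j y => (F j (y + ε) - T j (y + ε)) - (F j y - T j y) with hGdef
    have hGderiv : ∀ j < m - 1, ∀ y ∈ Set.Icc x (x + ((m - 1 : ℕ) : ℝ) * ε),
        HasDerivAt (G j) (G (j + 1) y) y := by
      intro j hj y hy
      have hyb : y + ε ∈ Set.Ioo a b := by
        constructor
        · linarith [hy.1, hx.1]
        · rw [hcastm] at hy
          have := hy.2
          nlinarith [hmεb, hεpos]
      have hya : y ∈ Set.Ioo a b := by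
        constructor
        · linarith [hy.1, hx.1]
        · rw [hcastm] at hy
          have := hy.2
          nlinarith [hmεb, hεpos]
      have h1 : HasDerivAt (fun z => F j (z + ε)) (F (j + 1) (y + ε)) y := by
        have := HasDerivAt.comp y (hF j (by omega) (y + ε) hyb) ((hasDerivAt_id y).add_const ε)
        simpa [Function.comp_def] using this
      have h2 : HasDerivAt (fun z => T j (z + ε)) (T (j + 1) (y + ε)) y := by
        have := HasDerivAt.comp y (hTderiv j (by omega) (y + ε)) ((hasDerivAt_id y).add_const ε)
        simpa [Function.comp_def] using this
      exact (h1.sub h2).sub ((hF j (by omega) y hya).sub (hTderiv j (by omega) y))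
    obtain ⟨ξ, hξ, hξval⟩ := fd_mvt (m - 1) G x ε hεpos hGderiv
    have hiter : (fwdDiff ε)^[m] r x = (fwdDiff ε)^[m - 1] (G 0) x := by
      conv_lhs => rw [show m = m - 1 + 1 from by omega]
      rw [Function.iterate_succ_apply]
      rfl
    -- identify G (m-1) with φ differences
    have hFTφ : ∀ y : ℝ, F (m - 1) y - T (m - 1) y = φ y := by
      intro y
      rw [hT1, hφdef]; ring
    have hGφ : G (m - 1) ξ = φ (ξ + ε) - φ ξ := by
      simp only [hGdef]
      rw [← hFTφ, ← hFTφ]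
    -- bounds
    have hξx : x ≤ ξ := hξ.1
    have hξub : ξ ≤ x + ((m:ℝ) - 1) * ε := by
      have := hξ.2; rw [hcastm] at this; exact this
    have hb1 : |φ ξ| ≤ δ / (2 * m + 2) * |ξ - x| := by
      apply hball
      rw [Real.dist_eq]
      have : |ξ - x| ≤ ((m:ℝ) - 1) * ε := by
        rw [abs_of_nonneg (by linarith)]
        linarith
      have hge : ((m:ℝ) - 1) * ε ≤ (m:ℝ) * ε := by nlinarith
      calc |ξ - x| ≤ ((m:ℝ) - 1) * ε := this
        _ ≤ (m:ℝ) * ε := hge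
        _ < ρ := hmερ
    have hb2 : |φ (ξ + ε)| ≤ δ / (2 * m + 2) * |ξ + ε - x| := by
      apply hball
      rw [Real.dist_eq]
      have : |ξ + ε - x| ≤ (m:ℝ) * ε := by
        rw [abs_of_nonneg (by linarith)]
        nlinarith
      linarith [hmερ]
    have habs1 : |ξ - x| ≤ (m:ℝ) * ε := by
      rw [abs_of_nonneg (by linarith)]; nlinarith
    have habs2 : |ξ + ε - x| ≤ (m:ℝ) * ε := by
      rw [abs_of_nonneg (by linarith)]; nlinarith
    -- final bound
    rw [Real.dist_eq, sub_zero, hiter, hξval, hGφ]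
    have hεm1 : (0:ℝ) < ε ^ (m - 1) := by positivity
    have hεmpow : ε ^ m = ε ^ (m - 1) * ε := by
      conv_lhs => rw [show m = m - 1 + 1 from by omega]
      rw [pow_succ]
    have hnum : |φ (ξ + ε) - φ ξ| ≤ δ / (2 * m + 2) * (2 * (m:ℝ) * ε) := by
      calc |φ (ξ + ε) - φ ξ| ≤ |φ (ξ + ε)| + |φ ξ| := abs_sub _ _
        _ ≤ δ / (2 * m + 2) * |ξ + ε - x| + δ / (2 * m + 2) * |ξ - x| := by
            linarith [hb1, hb2]
        _ ≤ δ / (2 * m + 2) * (2 * (m:ℝ) * ε) := by nlinarith [abs_nonneg (ξ - x)]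
    rw [abs_div, abs_mul, abs_of_nonneg hεm1.le, abs_of_nonneg (le_of_lt (by positivity : (0:ℝ) < ε ^ m))]
    rw [hεmpow]
    rw [div_lt_iff₀ (by positivity)]
    calc ε ^ (m - 1) * |φ (ξ + ε) - φ ξ| ≤ ε ^ (m - 1) * (δ / (2 * m + 2) * (2 * (m:ℝ) * ε)) := by
          nlinarith [abs_nonneg (φ (ξ + ε) - φ ξ)]
      _ < δ * (ε ^ (m - 1) * ε) := by
          have h2m : (0:ℝ) < 2 * (m:ℝ) + 2 := by positivity
          have hlt : δ / (2 * m + 2) * (2 * (m:ℝ) * ε) < δ * ε := by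
            rw [div_mul_eq_mul_div, div_lt_iff₀ h2m]
            nlinarith
          have h3 := mul_lt_mul_of_pos_left hlt hεm1
          nlinarith [h3]
  -- combine
  have hcomb : Filter.Tendsto (fun ε : ℝ => F m x + (fwdDiff ε)^[m] r x / ε ^ m)
      (𝓝[>] (0:ℝ)) (𝓝 (F m x + 0)) := tendsto_const_nhds.add main
  rw [add_zero] at hcomb
  refine Filter.Tendsto.congr' ?_ hcomb
  filter_upwards [self_mem_nhdsWithin] with ε (hε : ε ∈ Set.Ioi (0:ℝ))
  have hεpos : (0:ℝ) < ε := hε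
  rw [hdecomp ε, hTfd ε hεpos]
  field_simp

lemma iterDW_open {f : ℝ → ℝ} {s : Set ℝ} (hs : IsOpen s) {x : ℝ} (hx : x ∈ s) (j : ℕ) :
    iteratedDerivWithin j f s x = iteratedDeriv j f x := by
  rw [iteratedDerivWithin_eq_iteratedFDerivWithin, iteratedDeriv_eq_iteratedFDeriv,
    iteratedFDerivWithin_of_isOpen j hs hx]


/-- `(g_0, …, g_k)` is a T₊-system on `[a, b]`: the determinant
`det (g_i(x_j))` is strictly positive whenever `a ≤ x_0 < … < x_k ≤ b`. -/
def IsTPlusSystem {k : ℕ} (a b : ℝ) (g : Fin (k + 1) → ℝ → ℝ) : Prop :=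
  ∀ x : Fin (k + 1) → ℝ, StrictMono x → (∀ j, x j ∈ Set.Icc a b) →
    0 < (Matrix.of fun i j => g i (x j)).det

/-- The Wronskian `W_0^k(x) = det (g_i^{(j)}(x))_{i,j=0}^k`, with the
derivatives taken within the open interval `(a, b)`. -/
noncomputable def wronskian (a b : ℝ) {n : ℕ} (g : Fin (n + 1) → ℝ → ℝ)
    (k : ℕ) (hk : k ≤ n) (x : ℝ) : ℝ :=
  (Matrix.of fun i j : Fin (k + 1) =>
    iteratedDerivWithin (j : ℕ) (g (Fin.castLE (by omega) i)) (Set.Ioo a b) x).det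

set_option maxHeartbeats 1000000 in
/-- If `g_0, …, g_n` are continuous on `[a, b]`, `n` times differentiable on
`(a, b)`, and form an M₊-system on `[a, b]`, then all the Wronskians
`W_0^k`, `k = 0, …, n`, are nonnegative on `(a, b)`. -/
theorem mplus_wronskian_nonneg (a b : ℝ) (hab : a < b) (n : ℕ)
    (g : Fin (n + 1) → ℝ → ℝ) (hg : ∀ i, ContinuousOn (g i) (Set.Icc a b))
    (hdiff : ∀ i, ∀ j : ℕ, j < n →
      DifferentiableOn ℝ (iteratedDerivWithin j (g i) (Set.Ioo a b)) (Set.Ioo a b))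
    (hM : ∀ k : ℕ, ∀ hk : k ≤ n,
      IsTPlusSystem a b (fun i : Fin (k + 1) => g (Fin.castLE (by omega) i))) :
    ∀ x ∈ Set.Ioo a b, ∀ k : ℕ, ∀ hk : k ≤ n, 0 ≤ wronskian a b g k hk x := by
  intro x hx k hk
  have hcast : k + 1 ≤ n + 1 := by omega
  set f : Fin (k + 1) → ℝ → ℝ := fun i => g (Fin.castLE hcast i) with hfdef
  -- derivative chain
  have hHD : ∀ i : Fin (k + 1), ∀ j, j < n → ∀ y ∈ Set.Ioo a b,
      HasDerivAt (iteratedDeriv j (f i)) (iteratedDeriv (j + 1) (f i) y) y := by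
    intro i j hj y hy
    have hdo := hdiff (Fin.castLE hcast i) j hj
    have hev : iteratedDerivWithin j (f i) (Set.Ioo a b) =ᶠ[𝓝 y] iteratedDeriv j (f i) := by
      filter_upwards [Ioo_mem_nhds hy.1 hy.2] with z hz
      exact iterDW_open isOpen_Ioo hz j
    have hda : DifferentiableAt ℝ (iteratedDeriv j (f i)) y := by
      have h1 := (hdo y hy).differentiableAt (Ioo_mem_nhds hy.1 hy.2)
      exact h1.congr_of_eventuallyEq hev.symm
    rw [iteratedDeriv_succ]
    exact hda.hasDerivAt
  -- the limit matrix
  set M : Matrix (Fin (k + 1)) (Fin (k + 1)) ℝ :=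
    Matrix.of fun i j : Fin (k + 1) => iteratedDeriv (j : ℕ) (f i) x with hMdef
  have hW : wronskian a b g k hk x = M.det := by
    unfold wronskian
    congr 1
    ext i j
    exact iterDW_open isOpen_Ioo hx (j : ℕ)
  -- approximating matrices
  set N : ℝ → Matrix (Fin (k + 1)) (Fin (k + 1)) ℝ :=
    fun ε => Matrix.of fun i j : Fin (k + 1) =>
      (fwdDiff ε)^[(j : ℕ)] (f i) x / ε ^ (j : ℕ) with hNdef
  -- entrywise limits
  have hTD : ∀ i j : Fin (k + 1), Filter.Tendsto (fun ε => N ε i j) (𝓝[>] (0 : ℝ))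
      (𝓝 (M i j)) := by
    intro i j
    have hder : ∀ l < (j : ℕ), ∀ y ∈ Set.Ioo a b,
        HasDerivAt (iteratedDeriv l (f i)) (iteratedDeriv (l + 1) (f i) y) y := by
      intro l hl y hy
      have hln : l < n := by have := j.is_le; omega
      exact hHD i l hln y hy
    have := fd_tendsto a b (fun l => iteratedDeriv l (f i)) (j : ℕ) x hx hder
    simpa only [iteratedDeriv_zero, hNdef, hMdef, Matrix.of_apply] using this
  -- determinant limit
  have hdetT : Filter.Tendsto (fun ε => (N ε).det) (𝓝[>] (0 : ℝ)) (𝓝 M.det) := by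
    simp only [Matrix.det_apply']
    apply tendsto_finset_sum
    intro σ _
    apply Filter.Tendsto.const_mul
    exact tendsto_finset_prod _ fun i _ => hTD (σ i) i
  -- eventual nonnegativity of the approximating determinants
  have hev : ∀ᶠ ε in 𝓝[>] (0 : ℝ), 0 ≤ (N ε).det := by
    have hpos : (0 : ℝ) < (b - x) / (k + 1) := by
      have : (0:ℝ) < b - x := by linarith [hx.2]
      positivity
    filter_upwards [Ioo_mem_nhdsGT_of_mem (Set.left_mem_Ico.2 hpos)] with ε hε
    have hεpos : 0 < ε := hε.1
    have hkb : x + (k : ℝ) * ε < b := by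
      have h1 : ((k : ℝ) + 1) * ε < b - x := by
        have := hε.2
        have hk1 : (0:ℝ) < (k:ℝ) + 1 := by positivity
        calc ((k : ℝ) + 1) * ε < ((k : ℝ) + 1) * ((b - x) / (k + 1)) := by
              apply mul_lt_mul_of_pos_left this hk1
          _ = b - x := by field_simp
      nlinarith [hεpos]
    -- nodes
    set ν : Fin (k + 1) → ℝ := fun j => x + (j : ℕ) * ε with hνdef
    have hmono : StrictMono ν := by
      intro p q hpq
      simp only [hνdef]
      have : ((p : ℕ) : ℝ) < ((q : ℕ) : ℝ) := by exact_mod_cast hpq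
      nlinarith
    have hmem : ∀ j, ν j ∈ Set.Icc a b := by
      intro j
      have hj : ((j : ℕ) : ℝ) ≤ (k : ℝ) := by exact_mod_cast j.is_le
      constructor
      · have : (0:ℝ) ≤ ((j : ℕ) : ℝ) * ε := by positivity
        simp only [hνdef]; linarith [hx.1]
      · simp only [hνdef]
        nlinarith [hkb, hεpos]
    have hA := hM k hk ν hmono hmem
    set A : Matrix (Fin (k + 1)) (Fin (k + 1)) ℝ :=
      Matrix.of fun i j : Fin (k + 1) => f i (ν j) with hAdef
    have hApos : 0 < A.det := hA
    -- the unitriangular matrix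
    set Q : Matrix (Fin (k + 1)) (Fin (k + 1)) ℝ :=
      Matrix.of fun p j : Fin (k + 1) =>
        ((-1 : ℝ) ^ ((j : ℕ) - (p : ℕ)) * ((j : ℕ).choose (p : ℕ))) with hQdef
    have hQdet : Q.det = 1 := by
      have htri : Q.BlockTriangular id := by
        intro p j hpj
        have h1 : (j : ℕ) < (p : ℕ) := hpj
        simp only [hQdef, Matrix.of_apply]
        rw [Nat.choose_eq_zero_of_lt h1]
        simp
      rw [Matrix.det_of_upperTriangular htri]
      apply Finset.prod_eq_one
      intro p _
      simp [hQdef]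
    -- B = A * Q
    set B : Matrix (Fin (k + 1)) (Fin (k + 1)) ℝ :=
      Matrix.of fun i j : Fin (k + 1) => (fwdDiff ε)^[(j : ℕ)] (f i) x with hBdef
    have hBAQ : B = A * Q := by
      ext i j
      rw [Matrix.mul_apply]
      simp only [hBdef, hAdef, hQdef, Matrix.of_apply]
      rw [fwdDiff_iter_eq_sum_shift ε (f i) (j : ℕ) x]
      simp only [hνdef]
      rw [Fin.sum_univ_eq_sum_range
        (fun p => f i (x + (p : ℝ) * ε) * ((-1 : ℝ) ^ ((j : ℕ) - p) * (((j : ℕ).choose p : ℕ) : ℝ)))]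
      rw [← Finset.sum_subset (Finset.range_subset_range.2 (by omega : (j : ℕ) + 1 ≤ k + 1)) ?_]
      · refine Finset.sum_congr rfl fun p _ => ?_
        rw [zsmul_eq_mul, nsmul_eq_mul]
        push_cast
        ring
      · intro p hp hnp
        have hjp : (j : ℕ) < p := by
          simp only [Finset.mem_range] at hnp
          omega
        rw [Nat.choose_eq_zero_of_lt hjp]
        simp
    have hNB : (N ε).det = A.det * ∏ j : Fin (k + 1), (ε ^ (j : ℕ))⁻¹ := by
      have hND : N ε = B * Matrix.diagonal (fun j : Fin (k + 1) => (ε ^ (j : ℕ))⁻¹) := by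
        ext i j
        rw [Matrix.mul_diagonal]
        simp only [hNdef, hBdef, Matrix.of_apply, div_eq_mul_inv]
      rw [hND, Matrix.det_mul, Matrix.det_diagonal, hBAQ, Matrix.det_mul, hQdet, mul_one]
    rw [hNB]
    have : (0:ℝ) < ∏ j : Fin (k + 1), (ε ^ (j : ℕ))⁻¹ := by
      apply Finset.prod_pos
      intro j _
      positivity
    positivity
  rw [hW]
  exact ge_of_tendsto hdetT hev
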